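/- Suppose 𝓑 is countably generated, F is a finite group of measurable self-maps of Ω, 𝓐 = 𝓐_F is the F-invariant σ-field, and μ is a regular conditional distribution for P given 𝓐. Then there exists A₀ ∈ 𝓐 with P(A₀) = 1 such that μ(ω)(A) ∈ {0,1} for all A ∈ 𝓐 and all ω ∈ A₀. -/

import Mathlib

open MeasureTheory MeasurableSpace Set Filter
open scoped ENNReal

/-- A regular conditional distribution for `P` given the sub-σ-field `𝓐`. -/
def IsRCD {Ω : Type*} [m𝓑 : MeasurableSpace Ω] (𝓐 : MeasurableSpace Ω)
    (P : @Measure Ω m𝓑) (μ : Ω → @Measure Ω m𝓑) : Prop :=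
  (∀ ω, IsProbabilityMeasure (μ ω)) ∧
  (∀ B : Set Ω, MeasurableSet[m𝓑] B → Measurable[𝓐] fun ω => μ ω B) ∧
  (∀ B : Set Ω, MeasurableSet[m𝓑] B → ∀ A : Set Ω, MeasurableSet[𝓐] A →
    ∫⁻ ω in A, μ ω B ∂P = P (A ∩ B))


/-- The σ-field of sets invariant under every map in `F`. -/
def invariantSigma {Ω : Type*} [m𝓑 : MeasurableSpace Ω] (F : Set (Ω → Ω)) :
    MeasurableSpace Ω where
  MeasurableSet' B := MeasurableSet[m𝓑] B ∧ ∀ f ∈ F, f ⁻¹' B = B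
  measurableSet_empty := ⟨MeasurableSet.empty, fun _ _ => Set.preimage_empty⟩
  measurableSet_compl := fun B hB => ⟨hB.1.compl, fun f hf => by
    rw [Set.preimage_compl, hB.2 f hf]⟩
  measurableSet_iUnion := fun s hs => ⟨MeasurableSet.iUnion fun i => (hs i).1,
    fun f hf => by
      simp only [Set.preimage_iUnion]
      exact Set.iUnion_congr fun i => (hs i).2 f hf⟩

/-- A "good monotone class" over an algebra `𝒜`. -/
def GoodMC {α : Type*} (𝒜 C : Set (Set α)) : Prop :=
  𝒜 ⊆ C ∧
  (∀ B : ℕ → Set α, Monotone B → (∀ n, B n ∈ C) → (⋃ n, B n) ∈ C) ∧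
  (∀ B : ℕ → Set α, Antitone B → (∀ n, B n ∈ C) → (⋂ n, B n) ∈ C)

/-- The monotone class theorem. -/
theorem goodMC_measurableSet {α : Type*} (𝒜 : Set (Set α)) (h𝒜 : IsSetAlgebra 𝒜)
    (C : Set (Set α)) (hC : GoodMC 𝒜 C) :
    ∀ B, MeasurableSet[MeasurableSpace.generateFrom 𝒜] B → B ∈ C := by
  classical
  set M : Set (Set α) := {B | ∀ D, GoodMC 𝒜 D → B ∈ D} with hMdef
  have hM : GoodMC 𝒜 M :=
    ⟨fun s hs D hD => hD.1 hs,
     fun B hmono hB D hD => hD.2.1 B hmono (fun n => hB n D hD),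
     fun B hanti hB D hD => hD.2.2 B hanti (fun n => hB n D hD)⟩
  have hA_M : 𝒜 ⊆ M := hM.1
  -- the pairwise relation
  set Q : Set α → Set α → Prop := fun s t => s ∩ t ∈ M ∧ s ∪ t ∈ M ∧ s \ t ∈ M ∧ t \ s ∈ M
    with hQdef
  have hQsymm : ∀ s t, Q s t → Q t s := by
    rintro s t ⟨h1, h2, h3, h4⟩
    exact ⟨by rwa [Set.inter_comm], by rwa [Set.union_comm], h4, h3⟩
  -- D t, for t ∈ M, is closed under monotone limits
  have hDclose : ∀ t ∈ M, GoodMC ∅ {s | s ∈ M ∧ Q s t} := by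
    intro t ht
    refine ⟨by simp, ?_, ?_⟩
    · intro B hmono hB
      refine ⟨hM.2.1 B hmono fun n => (hB n).1, ?_, ?_, ?_, ?_⟩
      · rw [Set.iUnion_inter]
        exact hM.2.1 _ (fun a b hab => Set.inter_subset_inter_left _ (hmono hab))
          fun n => (hB n).2.1
      · rw [Set.iUnion_union]
        exact hM.2.1 _ (fun a b hab => Set.union_subset_union_left _ (hmono hab))
          fun n => (hB n).2.2.1
      · rw [Set.iUnion_diff]
        exact hM.2.1 _ (fun a b hab => Set.diff_subset_diff_left (hmono hab))
          fun n => (hB n).2.2.2.1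
      · rw [Set.diff_iUnion]
        exact hM.2.2 _ (fun a b hab => Set.diff_subset_diff_right (hmono hab))
          fun n => (hB n).2.2.2.2
    · intro B hanti hB
      refine ⟨hM.2.2 B hanti fun n => (hB n).1, ?_, ?_, ?_, ?_⟩
      · rw [Set.iInter_inter]
        exact hM.2.2 _ (fun a b hab => Set.inter_subset_inter_left _ (hanti hab))
          fun n => (hB n).2.1
      · rw [Set.iInter_union]
        exact hM.2.2 _ (fun a b hab => Set.union_subset_union_left _ (hanti hab))
          fun n => (hB n).2.2.1
      · rw [show (⋂ n, B n) \ t = ⋂ n, B n \ t by simp only [Set.diff_eq, Set.iInter_inter]]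
        exact hM.2.2 _ (fun a b hab => Set.diff_subset_diff_left (hanti hab))
          fun n => (hB n).2.2.2.1
      · rw [Set.diff_iInter]
        exact hM.2.1 _ (fun a b hab => Set.diff_subset_diff_right (hanti hab))
          fun n => (hB n).2.2.2.2
  -- step 1 : t ∈ 𝒜, s ∈ M implies Q s t
  have step1 : ∀ t ∈ 𝒜, ∀ s ∈ M, Q s t := by
    intro t ht s hs
    have hgood : GoodMC 𝒜 {s | s ∈ M ∧ Q s t} := by
      refine ⟨?_, (hDclose t (hA_M ht)).2.1, (hDclose t (hA_M ht)).2.2⟩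
      intro u hu
      exact ⟨hA_M hu, hA_M (h𝒜.inter_mem hu ht), hA_M (h𝒜.union_mem hu ht),
        hA_M (h𝒜.diff_mem hu ht), hA_M (h𝒜.diff_mem ht hu)⟩
    exact (hs _ hgood).2
  -- step 2 : s, t ∈ M implies Q s t
  have step2 : ∀ s ∈ M, ∀ t ∈ M, Q t s := by
    intro s hs t ht
    have hgood : GoodMC 𝒜 {u | u ∈ M ∧ Q u s} := by
      refine ⟨?_, (hDclose s hs).2.1, (hDclose s hs).2.2⟩
      intro u hu
      exact ⟨hA_M hu, hQsymm _ _ (step1 u hu s hs)⟩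
    exact (ht _ hgood).2
  -- M is a σ-algebra
  have hempty : (∅ : Set α) ∈ M := hA_M h𝒜.empty_mem
  have huniv : (univ : Set α) ∈ M := hA_M h𝒜.univ_mem
  have hcompl : ∀ s ∈ M, sᶜ ∈ M := by
    intro s hs
    have := (step2 s hs univ huniv).2.2.1
    rwa [← Set.compl_eq_univ_diff] at this
  have hunion2 : ∀ s ∈ M, ∀ t ∈ M, s ∪ t ∈ M := by
    intro s hs t ht
    exact (step2 t ht s hs).2.1
  -- M is closed under countable unions
  have hiUnion : ∀ B : ℕ → Set α, (∀ n, B n ∈ M) → (⋃ n, B n) ∈ M := by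
    intro B hB
    have hpart : ∀ n, (⋃ i ∈ Finset.range (n + 1), B i) ∈ M := by
      intro n
      induction n with
      | zero => simpa using hB 0
      | succ k ih =>
        have : (⋃ i ∈ Finset.range (k + 2), B i) =
            (⋃ i ∈ Finset.range (k + 1), B i) ∪ B (k + 1) := by
          ext x
          simp only [Set.mem_iUnion, Finset.mem_range, Set.mem_union]
          constructor
          · rintro ⟨i, hi, hx⟩
            rcases Nat.lt_succ_iff_lt_or_eq.mp hi with h | h
            · exact Or.inl ⟨i, h, hx⟩
            · exact Or.inr (h ▸ hx)
          · rintro (⟨i, hi, hx⟩ | hx)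
            · exact ⟨i, Nat.lt_succ_of_lt hi, hx⟩
            · exact ⟨k + 1, Nat.lt_succ_self _, hx⟩
        rw [this]
        exact hunion2 _ ih _ (hB (k + 1))
    have hmono : Monotone fun n => ⋃ i ∈ Finset.range (n + 1), B i := by
      intro a b hab
      exact Set.biUnion_subset_biUnion_left (fun i hi =>
        Finset.mem_range.mpr (lt_of_lt_of_le (Finset.mem_range.mp hi) (by omega)))
    have : (⋃ n, ⋃ i ∈ Finset.range (n + 1), B i) = ⋃ n, B n := by
      ext x
      simp only [Set.mem_iUnion, Finset.mem_range]
      constructor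
      · rintro ⟨n, i, _, hx⟩; exact ⟨i, hx⟩
      · rintro ⟨n, hx⟩; exact ⟨n, n, Nat.lt_succ_self _, hx⟩
    rw [← this]
    exact hM.2.1 _ hmono hpart
  -- conclude via a measurable-space structure
  let mM : MeasurableSpace α :=
    { MeasurableSet' := fun s => s ∈ M
      measurableSet_empty := hempty
      measurableSet_compl := fun s hs => hcompl s hs
      measurableSet_iUnion := fun B hB => hiUnion B hB }
  intro B hB
  have hle : MeasurableSpace.generateFrom 𝒜 ≤ mM :=
    MeasurableSpace.generateFrom_le fun t ht => (hA_M ht : t ∈ M)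
  exact (hle B hB : B ∈ M) C hC

lemma measurableSet_ne_ennreal {α : Type*} {m : MeasurableSpace α} {f g : α → ℝ≥0∞}
    (hf : Measurable[m] f) (hg : Measurable[m] g) : MeasurableSet[m] {x | f x ≠ g x} := by
  have : {x | f x ≠ g x} = {x | f x < g x} ∪ {x | g x < f x} := by
    ext x
    simp only [mem_setOf_eq, mem_union]
    constructor
    · exact fun h => h.lt_or_gt
    · rintro (h | h); exacts [h.ne, h.ne']
  rw [this]
  exact (measurableSet_lt hf hg).union (measurableSet_lt hg hf)

/-- If 𝓑 is countably generated, F is a finite group of measurable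
self-maps, and μ is an r.c.d. for P given 𝓐_F, then μ(ω) is 0-1 on 𝓐_F for ω in a
P-full set A₀ ∈ 𝓐_F. -/
theorem stmt_7 {Ω : Type*} [m𝓑 : MeasurableSpace Ω] [CountablyGenerated Ω]
    (P : @Measure Ω m𝓑) (hP : IsProbabilityMeasure P)
    (F : Set (Ω → Ω)) (hFfin : F.Finite) (hFm : ∀ f ∈ F, Measurable f)
    (hid : id ∈ F) (hcomp : ∀ f ∈ F, ∀ g ∈ F, f ∘ g ∈ F)
    (hinv : ∀ f ∈ F, ∃ g ∈ F, f ∘ g = id ∧ g ∘ f = id)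
    (μ : Ω → @Measure Ω m𝓑) (hμ : @IsRCD Ω m𝓑 (invariantSigma F) P μ) :
    ∃ A₀ : Set Ω, MeasurableSet[invariantSigma F] A₀ ∧ P A₀ = 1 ∧
      ∀ ω ∈ A₀, ∀ A : Set Ω, MeasurableSet[invariantSigma F] A →
        μ ω A = 0 ∨ μ ω A = 1 := by
  classical
  have h𝓐le : invariantSigma F ≤ m𝓑 := fun s hs => hs.1
  -- the symmetrization map
  set Φ : Set Ω → Set Ω := fun B => ⋂ f ∈ F, f ⁻¹' B with hΦdef
  have hΦmem : ∀ ω B, ω ∈ Φ B ↔ ∀ f ∈ F, f ω ∈ B := by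
    intro ω B; simp [hΦdef]
  -- Φ of a measurable set is invariant
  have hΦinv : ∀ B : Set Ω, MeasurableSet[m𝓑] B → MeasurableSet[invariantSigma F] (Φ B) := by
    intro B hB
    refine ⟨MeasurableSet.biInter hFfin.countable fun f hf => (hFm f hf) hB, ?_⟩
    intro g hg
    ext ω
    rw [Set.mem_preimage, hΦmem, hΦmem]
    constructor
    · intro h k hk
      obtain ⟨g', hg', hgg', hg'g⟩ := hinv g hg
      have hkg' : k ∘ g' ∈ F := hcomp k hk g' hg'
      have h2 := h (k ∘ g') hkg'
      have hx : g' (g ω) = ω := congrFun hg'g ω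
      simp only [Function.comp_apply] at h2
      rwa [hx] at h2
    · intro h f hf
      exact h (f ∘ g) (hcomp f hf g hg)
  -- Φ fixes invariant sets
  have hΦfix : ∀ A : Set Ω, MeasurableSet[invariantSigma F] A → Φ A = A := by
    intro A hA
    ext ω
    rw [hΦmem]
    constructor
    · intro h; simpa using h id hid
    · intro h f hf
      have : f ⁻¹' A = A := hA.2 f hf
      rw [← this] at h; exact h
  -- Φ commutes with countable intersections
  have hΦiInter : ∀ B : ℕ → Set Ω, Φ (⋂ n, B n) = ⋂ n, Φ (B n) := by
    intro B
    ext ω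
    simp only [Set.mem_iInter, hΦmem]
    exact ⟨fun h n f hf => h f hf n, fun h f hf n => h n f hf⟩
  -- Φ commutes with monotone countable unions
  have hΦiUnion : ∀ B : ℕ → Set Ω, Monotone B → Φ (⋃ n, B n) = ⋃ n, Φ (B n) := by
    intro B hmono
    apply Set.Subset.antisymm
    · intro ω hω
      rw [hΦmem] at hω
      simp only [Set.mem_iUnion] at hω ⊢
      haveI : Finite ↥F := hFfin.to_subtype
      haveI : Nonempty ↥F := ⟨⟨id, hid⟩⟩
      have h' : ∀ f : F, ∃ n, (f : Ω → Ω) ω ∈ B n := fun f => hω f f.2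
      choose n hn using h'
      obtain ⟨f₀, hf₀⟩ := Finite.exists_max n
      refine ⟨n f₀, ?_⟩
      rw [hΦmem]
      intro f hf
      exact hmono (hf₀ ⟨f, hf⟩) (hn ⟨f, hf⟩)
    · intro ω hω
      simp only [Set.mem_iUnion] at hω
      obtain ⟨k, hk⟩ := hω
      rw [hΦmem] at hk ⊢
      intro f hf
      exact Set.mem_iUnion.mpr ⟨k, hk f hf⟩
  -- the countable generating algebra of 𝓑
  set 𝒜lg : Set (Set Ω) := generateSetAlgebra (countableGeneratingSet Ω) with h𝒜def
  have h𝒜gen : MeasurableSpace.generateFrom 𝒜lg = m𝓑 := by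
    rw [h𝒜def, generateFrom_generateSetAlgebra_eq, generateFrom_countableGeneratingSet]
  have h𝒜meas : ∀ D ∈ 𝒜lg, MeasurableSet[m𝓑] D := by
    intro D hD
    rw [← h𝒜gen]
    exact measurableSet_generateFrom hD
  have h𝒜alg : IsSetAlgebra 𝒜lg := isSetAlgebra_generateSetAlgebra
  have h𝒜count : 𝒜lg.Countable := countable_generateSetAlgebra (countable_countableGeneratingSet)
  -- the countable π-system generating 𝓐
  set 𝓖 : Set (Set Ω) := Φ '' 𝒜lg with h𝓖def
  have h𝓖count : 𝓖.Countable := h𝒜count.image Φ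
  have h𝓖pi : IsPiSystem 𝓖 := by
    rintro s ⟨D₁, hD₁, rfl⟩ t ⟨D₂, hD₂, rfl⟩ -
    refine ⟨D₁ ∩ D₂, h𝒜alg.inter_mem hD₁ hD₂, ?_⟩
    ext ω
    simp only [hΦmem, Set.mem_inter_iff, Set.mem_preimage]
    constructor
    · intro h; exact ⟨fun f hf => (h f hf).1, fun f hf => (h f hf).2⟩
    · intro h f hf; exact ⟨h.1 f hf, h.2 f hf⟩
  have h𝓖A : ∀ G ∈ 𝓖, MeasurableSet[invariantSigma F] G := by
    rintro G ⟨D, hD, rfl⟩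
    exact hΦinv D (h𝒜meas D hD)
  -- 𝓒₀ := generateFrom 𝓖 coincides with the invariant σ-field
  have claimA : ∀ s : Set Ω, MeasurableSet[MeasurableSpace.generateFrom 𝓖] s →
      MeasurableSet[invariantSigma F] s := fun s hs =>
    (MeasurableSpace.generateFrom_le (fun t ht => h𝓖A t ht)) s hs
  have claimB : ∀ A : Set Ω, MeasurableSet[invariantSigma F] A →
      MeasurableSet[MeasurableSpace.generateFrom 𝓖] A := by
    intro A hA
    have hgood : GoodMC 𝒜lg
        {B | MeasurableSet[m𝓑] B ∧ MeasurableSet[MeasurableSpace.generateFrom 𝓖] (Φ B)} := by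
      refine ⟨?_, ?_, ?_⟩
      · intro D hD
        exact ⟨h𝒜meas D hD, measurableSet_generateFrom (Set.mem_image_of_mem Φ hD)⟩
      · intro B hmono hB
        exact ⟨MeasurableSet.iUnion fun n => (hB n).1,
          by rw [hΦiUnion B hmono]; exact MeasurableSet.iUnion fun n => (hB n).2⟩
      · intro B hanti hB
        exact ⟨MeasurableSet.iInter fun n => (hB n).1,
          by rw [hΦiInter B]; exact MeasurableSet.iInter fun n => (hB n).2⟩
    have key := goodMC_measurableSet 𝒜lg h𝒜alg _ hgood A (by rw [h𝒜gen]; exact hA.1)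
    have := key.2
    rwa [hΦfix A hA] at this
  -- the r.c.d. properties
  obtain ⟨hprob, hmeas, hint⟩ := hμ
  -- the null sets where μ ω fails to mimic the indicator
  have hN : ∀ G : Set Ω, MeasurableSet[invariantSigma F] G →
      MeasurableSet[invariantSigma F] {ω | μ ω G ≠ G.indicator 1 ω} ∧
        P {ω | μ ω G ≠ G.indicator 1 ω} = 0 := by
    intro G hG
    have hφ𝓐 : Measurable[invariantSigma F] fun ω => μ ω G := hmeas G hG.1
    have hφm : Measurable[m𝓑] fun ω => μ ω G := hφ𝓐.mono h𝓐le le_rfl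
    have hle1 : ∀ ω, μ ω G ≤ 1 := by
      intro ω; haveI := hprob ω; exact prob_le_one
    have hind𝓐 : Measurable[invariantSigma F] (G.indicator (1 : Ω → ℝ≥0∞)) :=
      Measurable.indicator measurable_const hG
    constructor
    · exact measurableSet_ne_ennreal hφ𝓐 hind𝓐
    -- a.e. 1 on G
    have hEq1 : ∫⁻ ω in G, μ ω G ∂P = P G := by
      have := hint G hG.1 G hG; rwa [Set.inter_self] at this
    have h1 : ∀ᵐ ω ∂(P.restrict G), μ ω G = 1 := by
      have hub : ∫⁻ _ω in G, (1 : ℝ≥0∞) ∂P = P G := by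
        rw [MeasureTheory.lintegral_one, Measure.restrict_apply_univ]
      have hsub : ∫⁻ ω in G, (1 - μ ω G) ∂P = 0 := by
        rw [lintegral_sub hφm (by rw [hEq1]; exact measure_ne_top P G)
          (Filter.Eventually.of_forall hle1), hEq1, hub, tsub_self]
      have h0 := (lintegral_eq_zero_iff (measurable_const.sub hφm)).mp hsub
      filter_upwards [h0] with ω hω
      have hω' : 1 - μ ω G = 0 := hω
      exact le_antisymm (hle1 ω) (tsub_eq_zero_iff_le.mp hω')
    -- a.e. 0 on Gᶜ
    have hEq0 : ∫⁻ ω in Gᶜ, μ ω G ∂P = 0 := by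
      have := hint G hG.1 Gᶜ hG.compl
      rwa [Set.compl_inter_self, measure_empty] at this
    have h0 : ∀ᵐ ω ∂(P.restrict Gᶜ), μ ω G = 0 := by
      have := (lintegral_eq_zero_iff hφm).mp hEq0
      filter_upwards [this] with ω hω using hω
    -- combine
    have hz1 : P ({ω | μ ω G ≠ 1} ∩ G) = 0 := by
      have hms : MeasurableSet[m𝓑] {ω | μ ω G ≠ 1} :=
        measurableSet_ne_ennreal hφm measurable_const
      have := MeasureTheory.ae_iff.mp h1
      rwa [Measure.restrict_apply hms] at this
    have hz0 : P ({ω | μ ω G ≠ 0} ∩ Gᶜ) = 0 := by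
      have hms : MeasurableSet[m𝓑] {ω | μ ω G ≠ 0} :=
        measurableSet_ne_ennreal hφm measurable_const
      have := MeasureTheory.ae_iff.mp h0
      rwa [Measure.restrict_apply hms] at this
    have hNsub : {ω | μ ω G ≠ G.indicator 1 ω} ⊆
        ({ω | μ ω G ≠ 1} ∩ G) ∪ ({ω | μ ω G ≠ 0} ∩ Gᶜ) := by
      intro ω hω
      by_cases h : ω ∈ G
      · exact Or.inl ⟨by simpa [Set.indicator_of_mem h] using hω, h⟩
      · exact Or.inr ⟨by simpa [Set.indicator_of_notMem h] using hω, h⟩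
    exact measure_mono_null hNsub (measure_union_null hz1 hz0)
  -- the full set A₀
  refine ⟨(⋃ G ∈ 𝓖, {ω | μ ω G ≠ G.indicator 1 ω})ᶜ, ?_, ?_, ?_⟩
  · exact (MeasurableSet.biUnion h𝓖count fun G hG => (hN G (h𝓖A G hG)).1).compl
  · have hz : P (⋃ G ∈ 𝓖, {ω | μ ω G ≠ G.indicator 1 ω}) = 0 :=
      (measure_biUnion_null_iff h𝓖count).mpr fun G hG => (hN G (h𝓖A G hG)).2
    have hm : MeasurableSet[m𝓑] (⋃ G ∈ 𝓖, {ω | μ ω G ≠ G.indicator 1 ω}) :=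
      h𝓐le _ (MeasurableSet.biUnion h𝓖count fun G hG => (hN G (h𝓖A G hG)).1)
    rw [measure_compl hm (measure_ne_top P _), hz, measure_univ, tsub_zero]
  · intro ω hω A hA
    have hωnot : ∀ G ∈ 𝓖, μ ω G = G.indicator 1 ω := by
      intro G hG
      by_contra h
      exact hω (Set.mem_biUnion hG h)
    haveI := hprob ω
    have key : ∀ s : Set Ω, MeasurableSet[MeasurableSpace.generateFrom 𝓖] s →
        μ ω s = s.indicator 1 ω := by
      refine MeasurableSpace.induction_on_inter (m := MeasurableSpace.generateFrom 𝓖)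
        (C := fun s _ => μ ω s = s.indicator 1 ω) (s := 𝓖) rfl h𝓖pi (by simp) ?_ ?_ ?_
      · exact fun t ht => hωnot t ht
      · intro t htm heq
        have ht𝓑 : MeasurableSet[m𝓑] t := (claimA t htm).1
        rw [prob_compl_eq_one_sub ht𝓑, heq]
        by_cases hωt : ω ∈ t
        · simp [Set.indicator_of_mem hωt,
            Set.indicator_of_notMem (Set.notMem_compl_iff.mpr hωt)]
        · simp [Set.indicator_of_notMem hωt, Set.indicator_of_mem (Set.mem_compl hωt)]
      · intro f hdisj hfm hC
        have hfm𝓑 : ∀ n, MeasurableSet[m𝓑] (f n) := fun n => (claimA _ (hfm n)).1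
        rw [measure_iUnion hdisj hfm𝓑]
        by_cases hex : ∃ k, ω ∈ f k
        · obtain ⟨k, hk⟩ := hex
          have : ∑' n, μ ω (f n) = 1 := by
            rw [tsum_congr (fun n => hC n)]
            rw [tsum_eq_single k]
            · simp [Set.indicator_of_mem hk]
            · intro b hb
              have hdisj' : Disjoint (f b) (f k) := hdisj hb
              have : ω ∉ f b := fun h => (Set.disjoint_left.mp hdisj') h hk
              simp [Set.indicator_of_notMem this]
          rw [this]
          have : ω ∈ ⋃ n, f n := Set.mem_iUnion.mpr ⟨k, hk⟩
          simp [Set.indicator_of_mem this]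
        · push_neg at hex
          have : ∑' n, μ ω (f n) = 0 := by
            rw [tsum_congr (fun n => hC n)]
            simp [Set.indicator_of_notMem (hex _)]
          rw [this]
          have : ω ∉ ⋃ n, f n := by simpa using hex
          simp [Set.indicator_of_notMem this]
    have hAeq := key A (claimB A hA)
    by_cases hωA : ω ∈ A
    · right; rw [hAeq]; simp [Set.indicator_of_mem hωA]
    · left; rw [hAeq]; simp [Set.indicator_of_notMem hωA]
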